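/- arXiv:2008.13723 — 3 statements merged into one kernel-verified Lean document; each statement's English description precedes it below -/
import Mathlib

section
/- Let μ be a Borel probability measure on ℝⁿ, let σ > 0, and let g_σ(z) = (2πσ²)^{−n/2} exp(−‖z‖²/(2σ²)) be the density of the Gaussian N(0, σ²I). Define the smoothed density q(y) = ∫ g_σ(y − x) dμ(x). Then q is strictly positive and differentiable on ℝⁿ, the posterior mean m(y) = (∫ x · g_σ(y − x) dμ(x)) / q(y) is well defined (the integrand is μ-integrable for each y), and for every y ∈ ℝⁿ the identity m(y) − y = σ² ∇ log q(y) holds (Tweedie's formula). -/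
open MeasureTheory

local notation "⟪" x ", " y "⟫" => @inner ℝ _ _ x y

/-- Auxiliary bound: `t * exp (-t^2 / (2σ^2)) ≤ σ` for `t ≥ 0`. -/
lemma tweedie_aux_bound {σ t : ℝ} (hσ : 0 < σ) (ht : 0 ≤ t) :
    t * Real.exp (-t ^ 2 / (2 * σ ^ 2)) ≤ σ := by
  have h1 : t ^ 2 / (2 * σ ^ 2) + 1 ≤ Real.exp (t ^ 2 / (2 * σ ^ 2)) :=
    Real.add_one_le_exp _
  have h2 : Real.exp (-t ^ 2 / (2 * σ ^ 2)) = (Real.exp (t ^ 2 / (2 * σ ^ 2)))⁻¹ := by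
    rw [← Real.exp_neg]; ring_nf
  rw [h2]
  have hexp : 0 < Real.exp (t ^ 2 / (2 * σ ^ 2)) := Real.exp_pos _
  rw [mul_inv_le_iff₀ hexp]
  have h3 : t ≤ σ * (t ^ 2 / (2 * σ ^ 2) + 1) := by
    rw [← sub_nonneg]
    have he : σ * (t ^ 2 / (2 * σ ^ 2) + 1) - t = ((t - σ) ^ 2 + σ ^ 2) / (2 * σ) := by
      field_simp; ring
    rw [he]; positivity
  exact h3.trans (by nlinarith)

/-- Derivative of the shifted Gaussian kernel. -/
lemma tweedie_hasFDerivAt {n : ℕ} {σ : ℝ} (hσ : 0 < σ) (c : ℝ)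
    (x y : EuclideanSpace ℝ (Fin n)) :
    HasFDerivAt (fun y' => c * Real.exp (-‖y' - x‖ ^ 2 / (2 * σ ^ 2)))
      (innerSL ℝ (((σ ^ 2)⁻¹ * (c * Real.exp (-‖y - x‖ ^ 2 / (2 * σ ^ 2)))) • (x - y))) y := by
  have h1 : HasFDerivAt (fun y' : EuclideanSpace ℝ (Fin n) => y' - x)
      (ContinuousLinearMap.id ℝ (EuclideanSpace ℝ (Fin n))) y :=
    (hasFDerivAt_id y).sub_const x
  have h2 := h1.norm_sq
  have h3 := h2.const_mul (-(2 * σ ^ 2)⁻¹)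
  have h4 := h3.exp
  have h5 := h4.const_mul c
  have hfun : (fun y' : EuclideanSpace ℝ (Fin n) => c * Real.exp (-‖y' - x‖ ^ 2 / (2 * σ ^ 2)))
      = fun y' => c * Real.exp (-(2 * σ ^ 2)⁻¹ * ‖y' - x‖ ^ 2) := by
    funext z
    ring_nf
  rw [← hfun] at h5
  refine h5.congr_fderiv ?_
  refine ContinuousLinearMap.ext fun v => ?_
  simp only [ContinuousLinearMap.smul_apply, ContinuousLinearMap.comp_apply,
    ContinuousLinearMap.coe_smul', Pi.smul_apply, ContinuousLinearMap.id_apply,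
    innerSL_apply_apply, smul_eq_mul, real_inner_smul_left]
  rw [← neg_sub y x, inner_neg_left]
  have hexp : Real.exp (-(2 * σ ^ 2)⁻¹ * ‖y - x‖ ^ 2)
      = Real.exp (-‖y - x‖ ^ 2 / (2 * σ ^ 2)) := by ring_nf
  rw [hexp]
  have hσ2 : (σ:ℝ) ^ 2 ≠ 0 := by positivity
  generalize ⟪y - x, v⟫ = a
  generalize Real.exp (-‖y - x‖ ^ 2 / (2 * σ ^ 2)) = e
  field_simp
  ring

/-- Tweedie's formula. Let `μ` be a Borel probability measure on ℝⁿ, `σ > 0`, and let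
`g` be the density of the Gaussian `N(0, σ²I)`. Then the smoothed density
`q(y) = ∫ g(y − x) dμ(x)` is strictly positive and differentiable, the posterior-mean
integrand `x ↦ g(y − x) • x` is `μ`-integrable for each `y`, and the posterior mean
`m(y) = (∫ g(y − x) • x dμ(x)) / q(y)` satisfies `m(y) − y = σ² ∇ log q(y)`. -/
theorem tweedie_formula {n : ℕ}
    (μ : Measure (EuclideanSpace ℝ (Fin n))) [IsProbabilityMeasure μ]
    (σ : ℝ) (hσ : 0 < σ)
    (g : EuclideanSpace ℝ (Fin n) → ℝ)
    (hg : ∀ z, g z = (2 * Real.pi * σ ^ 2) ^ (-(n : ℝ) / 2) *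
      Real.exp (-‖z‖ ^ 2 / (2 * σ ^ 2)))
    (q : EuclideanSpace ℝ (Fin n) → ℝ)
    (hq : ∀ y, q y = ∫ x, g (y - x) ∂μ) :
    (∀ y, 0 < q y) ∧ Differentiable ℝ q ∧
    (∀ y, Integrable (fun x => g (y - x) • x) μ) ∧
    (∀ y, (q y)⁻¹ • (∫ x, g (y - x) • x ∂μ) - y
        = σ ^ 2 • gradient (fun z => Real.log (q z)) y) := by
  set c : ℝ := (2 * Real.pi * σ ^ 2) ^ (-(n : ℝ) / 2) with hc_def
  have hc : 0 < c := Real.rpow_pos_of_pos (by positivity) _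
  have hσ2 : (σ : ℝ) ^ 2 ≠ 0 := by positivity
  have hgpos : ∀ z : EuclideanSpace ℝ (Fin n), 0 < g z := by
    intro z; rw [hg]; positivity
  have hgle : ∀ z : EuclideanSpace ℝ (Fin n), g z ≤ c := by
    intro z
    rw [hg]
    have h1 : Real.exp (-‖z‖ ^ 2 / (2 * σ ^ 2)) ≤ 1 := by
      rw [Real.exp_le_one_iff, neg_div]
      exact neg_nonpos.mpr (by positivity)
    nlinarith
  have hgcont : Continuous g := by
    have : g = fun z : EuclideanSpace ℝ (Fin n) => c * Real.exp (-‖z‖ ^ 2 / (2 * σ ^ 2)) := funext hg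
    rw [this]; fun_prop
  have hnormg : ∀ z : EuclideanSpace ℝ (Fin n), ‖z‖ * g z ≤ c * σ := by
    intro z
    rw [hg]
    have := tweedie_aux_bound hσ (norm_nonneg z)
    nlinarith
  -- integrability of the kernel
  have hgmeas : ∀ y : EuclideanSpace ℝ (Fin n), AEStronglyMeasurable (fun x => g (y - x)) μ := fun y =>
    (hgcont.comp (continuous_const.sub continuous_id)).aestronglyMeasurable
  have hgint : ∀ y : EuclideanSpace ℝ (Fin n), Integrable (fun x => g (y - x)) μ := by
    intro y
    refine Integrable.mono' (integrable_const c) (hgmeas y) (ae_of_all _ fun x => ?_)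
    rw [Real.norm_eq_abs, abs_of_pos (hgpos _)]
    exact hgle _
  -- positivity of q
  have hqpos : ∀ y : EuclideanSpace ℝ (Fin n), 0 < q y := by
    intro y
    rw [hq]
    refine (integral_pos_iff_support_of_nonneg (fun x => (hgpos _).le) (hgint y)).2 ?_
    have hsupp : (Function.support fun x : EuclideanSpace ℝ (Fin n) => g (y - x)) = Set.univ :=
      Set.eq_univ_of_forall fun x => (hgpos _).ne'
    rw [hsupp]
    simp [measure_univ]
  -- the vector field w
  have hwcont : ∀ y : EuclideanSpace ℝ (Fin n), Continuous (fun x : EuclideanSpace ℝ (Fin n) => ((σ ^ 2)⁻¹ * g (y - x)) • (x - y)) := by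
    intro y
    exact ((continuous_const.mul (hgcont.comp (continuous_const.sub continuous_id))).smul
      (continuous_id.sub continuous_const))
  have hwnorm : ∀ y x : EuclideanSpace ℝ (Fin n), ‖((σ ^ 2)⁻¹ * g (y - x)) • (x - y)‖ ≤ (σ ^ 2)⁻¹ * (c * σ) := by
    intro y x
    rw [norm_smul, Real.norm_eq_abs, abs_of_pos (mul_pos (by positivity) (hgpos (y - x)))]
    rw [norm_sub_rev, mul_assoc]
    have h1 : g (y - x) * ‖y - x‖ ≤ c * σ := by
      have := hnormg (y - x); nlinarith
    have h2 : (0:ℝ) ≤ (σ ^ 2)⁻¹ := by positivity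
    exact mul_le_mul_of_nonneg_left h1 h2
  have hwint : ∀ y : EuclideanSpace ℝ (Fin n), Integrable (fun x : EuclideanSpace ℝ (Fin n) => ((σ ^ 2)⁻¹ * g (y - x)) • (x - y)) μ := by
    intro y
    exact Integrable.mono' (integrable_const _) (hwcont y).aestronglyMeasurable
      (ae_of_all _ fun x => hwnorm y x)
  -- pointwise derivative
  have hderiv : ∀ (x y : EuclideanSpace ℝ (Fin n)), HasFDerivAt (fun y' => g (y' - x))
      (innerSL ℝ (((σ ^ 2)⁻¹ * g (y - x)) • (x - y))) y := by
    intro x y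
    have h := tweedie_hasFDerivAt hσ c x y
    have hfg : (fun y' : EuclideanSpace ℝ (Fin n) => g (y' - x))
        = fun y' => c * Real.exp (-‖y' - x‖ ^ 2 / (2 * σ ^ 2)) := funext fun z => hg _
    rw [hfg, hg (y - x)]
    exact h
  -- derivative of q
  have hqderiv : ∀ y₀ : EuclideanSpace ℝ (Fin n), HasFDerivAt q
      (innerSL ℝ (∫ x, ((σ ^ 2)⁻¹ * g (y₀ - x)) • (x - y₀) ∂μ)) y₀ := by
    intro y₀
    have hqfun : q = fun y => ∫ x, g (y - x) ∂μ := funext hq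
    rw [hqfun]
    have h := hasFDerivAt_integral_of_dominated_of_fderiv_le
      (F := fun (y : EuclideanSpace ℝ (Fin n)) (x : EuclideanSpace ℝ (Fin n)) => g (y - x))
      (F' := fun (y : EuclideanSpace ℝ (Fin n)) (x : EuclideanSpace ℝ (Fin n)) => innerSL ℝ (((σ ^ 2)⁻¹ * g (y - x)) • (x - y)))
      (bound := fun _ => (σ ^ 2)⁻¹ * (c * σ)) (x₀ := y₀) Filter.univ_mem
      (Filter.Eventually.of_forall fun y => hgmeas y) (hgint y₀)
      (((innerSL ℝ).continuous.comp (hwcont y₀)).aestronglyMeasurable)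
      (ae_of_all _ fun x y _ => by rw [innerSL_apply_norm]; exact hwnorm y x)
      (integrable_const _)
      (ae_of_all _ fun x y _ => hderiv x y)
    rwa [(innerSL ℝ).integral_comp_comm (hwint y₀)] at h
  -- gradient of log q
  have hloggrad : ∀ y : EuclideanSpace ℝ (Fin n), HasGradientAt (fun z => Real.log (q z))
      ((q y)⁻¹ • ∫ x, ((σ ^ 2)⁻¹ * g (y - x)) • (x - y) ∂μ) y := by
    intro y
    rw [hasGradientAt_iff_hasFDerivAt]
    have h := (hqderiv y).log (hqpos y).ne'
    have heq : (InnerProductSpace.toDual ℝ (EuclideanSpace ℝ (Fin n)))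
        ((q y)⁻¹ • ∫ x, ((σ ^ 2)⁻¹ * g (y - x)) • (x - y) ∂μ)
        = (q y)⁻¹ • innerSL ℝ (∫ x, ((σ ^ 2)⁻¹ * g (y - x)) • (x - y) ∂μ) := by
      refine ContinuousLinearMap.ext fun z => ?_
      simp [InnerProductSpace.toDual_apply_apply, real_inner_smul_left]
    rw [heq]
    exact h
  -- integrability of the posterior-mean integrand
  have hint3 : ∀ y : EuclideanSpace ℝ (Fin n), Integrable (fun x => g (y - x) • x) μ := by
    intro y
    refine Integrable.mono' (integrable_const (c * σ + c * ‖y‖))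
      ((hgcont.comp (continuous_const.sub continuous_id)).smul continuous_id).aestronglyMeasurable
      (ae_of_all _ fun x => ?_)
    rw [norm_smul, Real.norm_eq_abs, abs_of_pos (hgpos _)]
    have h1 : ‖x‖ ≤ ‖y - x‖ + ‖y‖ := by
      have h2 : ‖x‖ = ‖y - (y - x)‖ := by rw [show y - (y - x) = x by abel]
      have h3 := norm_sub_le y (y - x)
      rw [h2]; linarith
    calc g (y - x) * ‖x‖ ≤ g (y - x) * (‖y - x‖ + ‖y‖) := by
          exact mul_le_mul_of_nonneg_left h1 (hgpos _).le
      _ = ‖y - x‖ * g (y - x) + g (y - x) * ‖y‖ := by ring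
      _ ≤ c * σ + c * ‖y‖ := by
          have := hnormg (y - x)
          have := hgle (y - x)
          have := norm_nonneg y
          nlinarith
  refine ⟨hqpos, fun y => (hqderiv y).differentiableAt, hint3, fun y => ?_⟩
  -- final algebra
  have hgradeq : gradient (fun z => Real.log (q z)) y
      = (q y)⁻¹ • ∫ x, ((σ ^ 2)⁻¹ * g (y - x)) • (x - y) ∂μ := (hloggrad y).gradient
  have hsw : σ ^ 2 • (∫ x, ((σ ^ 2)⁻¹ * g (y - x)) • (x - y) ∂μ)
      = ∫ x, g (y - x) • (x - y) ∂μ := by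
    rw [← integral_smul]
    congr 1
    funext x
    rw [smul_smul]
    congr 1
    field_simp
  have hsplit : ∫ x, g (y - x) • (x - y) ∂μ = (∫ x, g (y - x) • x ∂μ) - q y • y := by
    have hpt : (fun x : EuclideanSpace ℝ (Fin n) => g (y - x) • (x - y))
        = fun x => g (y - x) • x - g (y - x) • y := funext fun x => smul_sub _ _ _
    rw [hpt, integral_sub (hint3 y) ((hgint y).smul_const y), integral_smul_const, ← hq]
  rw [hgradeq, smul_comm, hsw, hsplit, smul_sub, smul_smul,
    inv_mul_cancel₀ (hqpos y).ne', one_smul]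
end

section
/- Let μ be a Borel probability measure on ℝⁿ, σ > 0, g_σ the density of N(0, σ²I), and q(y) = ∫ g_σ(y − x) dμ(x) the density of Y = X + ε where X ∼ μ and ε ∼ N(0, σ²I) are independent. Define r*(y) = E[X | Y = y] = (∫ x · g_σ(y − x) dμ(x)) / q(y). Then r* minimizes the denoising objective E‖r(Y) − X‖² over all measurable square-integrable reconstructions r : ℝⁿ → ℝⁿ, and it satisfies the exact residual identity r*(y) − y = σ² ∇ log q(y) for every y ∈ ℝⁿ. Hence the residual of the optimal denoising autoencoder, divided by σ², equals the score ∇ log q of the noise-smoothed data distribution. -/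
open MeasureTheory

section Aux
variable {E : Type*} [NormedAddCommGroup E] [InnerProductSpace ℝ E]

theorem dae_texp_bound {σ t : ℝ} (hσ : 0 < σ) (ht : 0 ≤ t) :
    t * Real.exp (-t ^ 2 / (2 * σ ^ 2)) ≤ 2 * σ := by
  rcases le_or_gt t (2 * σ) with h | h
  · calc t * Real.exp (-t ^ 2 / (2 * σ ^ 2)) ≤ t * 1 := by
          apply mul_le_mul_of_nonneg_left _ ht
          apply Real.exp_le_one_iff.mpr
          apply div_nonpos_of_nonpos_of_nonneg (by nlinarith) (by positivity)
      _ ≤ 2 * σ := by linarith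
  · have ht0 : 0 < t := lt_trans (by positivity) h
    have h2 : Real.exp (-t ^ 2 / (2 * σ ^ 2)) ≤ 2 * σ ^ 2 / t ^ 2 := by
      rw [neg_div, Real.exp_neg]
      rw [inv_le_iff_one_le_mul₀ (Real.exp_pos _)]
      calc (1 : ℝ) = (t ^ 2 / (2 * σ ^ 2)) * (2 * σ ^ 2 / t ^ 2) := by
            field_simp
        _ ≤ Real.exp (t ^ 2 / (2 * σ ^ 2)) * (2 * σ ^ 2 / t ^ 2) := by
            apply mul_le_mul_of_nonneg_right _ (by positivity)
            linarith [Real.add_one_le_exp (t ^ 2 / (2 * σ ^ 2))]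
        _ = 2 * σ ^ 2 / t ^ 2 * Real.exp (t ^ 2 / (2 * σ ^ 2)) := by ring
    calc t * Real.exp (-t ^ 2 / (2 * σ ^ 2)) ≤ t * (2 * σ ^ 2 / t ^ 2) := by
          exact mul_le_mul_of_nonneg_left h2 ht
      _ = 2 * σ ^ 2 / t := by field_simp
      _ ≤ 2 * σ := by
          rw [div_le_iff₀ ht0]
          nlinarith

theorem dae_gauss_hasFDerivAt (c σ : ℝ) (x y₀ : E) :
    HasFDerivAt (fun y : E => c * Real.exp (-‖y - x‖ ^ 2 / (2 * σ ^ 2)))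
      ((-(σ ^ 2)⁻¹ * (c * Real.exp (-‖y₀ - x‖ ^ 2 / (2 * σ ^ 2)))) • (innerSL ℝ (y₀ - x))) y₀ := by
  have h1 : HasFDerivAt (fun y : E => y - x) (ContinuousLinearMap.id ℝ E) y₀ :=
    (hasFDerivAt_id y₀).sub_const x
  have h2 : HasFDerivAt (fun y : E => (inner ℝ (y - x) (y - x) : ℝ))
      ((2 : ℝ) • (innerSL ℝ (y₀ - x))) y₀ := by
    refine (h1.inner ℝ h1).congr_fderiv ?_
    ext v
    simp [fderivInnerCLM_apply, real_inner_comm, inner_sub_left, inner_sub_right]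
    ring
  have h3 : HasFDerivAt (fun y : E => -‖y - x‖ ^ 2 / (2 * σ ^ 2))
      ((-(2 * σ ^ 2)⁻¹) • ((2 : ℝ) • (innerSL ℝ (y₀ - x)))) y₀ := by
    have := h2.const_mul (-(2 * σ ^ 2)⁻¹)
    refine this.congr_of_eventuallyEq (Filter.Eventually.of_forall fun y => ?_)
    show -‖y - x‖ ^ 2 / (2 * σ ^ 2) = -(2 * σ ^ 2)⁻¹ * inner ℝ (y - x) (y - x)
    rw [real_inner_self_eq_norm_sq]
    ring
  have h4 := (Real.hasDerivAt_exp (-‖y₀ - x‖ ^ 2 / (2 * σ ^ 2))).comp_hasFDerivAt y₀ h3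
  have h5 := h4.const_mul c
  refine h5.congr_fderiv ?_
  ext v
  simp only [ContinuousLinearMap.coe_smul', Pi.smul_apply, innerSL_apply_apply, smul_eq_mul]
  ring

end Aux


set_option synthInstance.maxHeartbeats 1000000 in
set_option maxHeartbeats 2000000 in
/-- Optimal denoising autoencoder. Let `μ` be a Borel probability measure on ℝⁿ
(the data distribution), `σ > 0`, `g` the density of `N(0, σ²I)`, `ν` the Gaussian
noise measure (with density `g` w.r.t. Lebesgue measure), and
`q(y) = ∫ g(y − x) dμ(x)` the density of `Y = X + ε` for independent `X ∼ μ`,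
`ε ∼ ν`. Then the conditional mean `r*(y) = (∫ g(y − x) • x dμ(x)) / q(y)` minimizes
the DAE objective `E‖r(X + ε) − X‖²` over all measurable square-integrable
reconstructions `r`, and satisfies the exact residual identity
`r*(y) − y = σ² ∇ log q(y)` for every `y`. -/
theorem optimal_dae_residual_is_score {n : ℕ}
    (μ : Measure (EuclideanSpace ℝ (Fin n))) [IsProbabilityMeasure μ]
    (σ : ℝ) (hσ : 0 < σ)
    (g : EuclideanSpace ℝ (Fin n) → ℝ)
    (hg : ∀ z, g z = (2 * Real.pi * σ ^ 2) ^ (-(n : ℝ) / 2) *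
      Real.exp (-‖z‖ ^ 2 / (2 * σ ^ 2)))
    (ν : Measure (EuclideanSpace ℝ (Fin n)))
    (hν : ν = volume.withDensity (fun z => ENNReal.ofReal (g z)))
    (q : EuclideanSpace ℝ (Fin n) → ℝ)
    (hq : ∀ y, q y = ∫ x, g (y - x) ∂μ)
    (rstar : EuclideanSpace ℝ (Fin n) → EuclideanSpace ℝ (Fin n))
    (hrstar : ∀ y, rstar y = (q y)⁻¹ • ∫ x, g (y - x) • x ∂μ) :
    (∀ r : EuclideanSpace ℝ (Fin n) → EuclideanSpace ℝ (Fin n), Measurable r →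
      MemLp (fun z : EuclideanSpace ℝ (Fin n) × EuclideanSpace ℝ (Fin n) =>
        r (z.1 + z.2)) 2 (μ.prod ν) →
      ∫⁻ z : EuclideanSpace ℝ (Fin n) × EuclideanSpace ℝ (Fin n),
          ENNReal.ofReal (‖rstar (z.1 + z.2) - z.1‖ ^ 2) ∂(μ.prod ν)
        ≤ ∫⁻ z : EuclideanSpace ℝ (Fin n) × EuclideanSpace ℝ (Fin n),
          ENNReal.ofReal (‖r (z.1 + z.2) - z.1‖ ^ 2) ∂(μ.prod ν)) ∧
    (∀ y, rstar y - y = σ ^ 2 • gradient (fun z => Real.log (q z)) y) := by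
  classical
  set c : ℝ := (2 * Real.pi * σ ^ 2) ^ (-(n : ℝ) / 2) with hc_def
  have hc : 0 < c := Real.rpow_pos_of_pos (by positivity) _
  have hgpos : ∀ z : EuclideanSpace ℝ (Fin n), 0 < g z := fun z => by rw [hg]; positivity
  have hgle : ∀ z : EuclideanSpace ℝ (Fin n), g z ≤ c := by
    intro z
    rw [hg]
    calc c * Real.exp (-‖z‖ ^ 2 / (2 * σ ^ 2)) ≤ c * 1 := by
          apply mul_le_mul_of_nonneg_left _ hc.le
          apply Real.exp_le_one_iff.mpr
          apply div_nonpos_of_nonpos_of_nonneg (neg_nonpos.mpr (by positivity)) (by positivity)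
      _ = c := mul_one c
  have hgnorm : ∀ z : EuclideanSpace ℝ (Fin n), g z * ‖z‖ ≤ c * (2 * σ) := by
    intro z
    rw [hg]
    have := dae_texp_bound (t := ‖z‖) hσ (norm_nonneg z)
    calc c * Real.exp (-‖z‖ ^ 2 / (2 * σ ^ 2)) * ‖z‖
        = c * (‖z‖ * Real.exp (-‖z‖ ^ 2 / (2 * σ ^ 2))) := by ring
      _ ≤ c * (2 * σ) := mul_le_mul_of_nonneg_left this hc.le
  have hgcont : Continuous g := by
    have : g = fun z => c * Real.exp (-‖z‖ ^ 2 / (2 * σ ^ 2)) := funext hg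
    rw [this]
    fun_prop
  -- integrability
  have int_g : ∀ y : EuclideanSpace ℝ (Fin n), Integrable (fun x => g (y - x)) μ := by
    intro y
    refine Integrable.mono' (integrable_const c) ?_ ?_
    · exact (hgcont.comp (continuous_const.sub continuous_id)).aestronglyMeasurable
    · exact Filter.Eventually.of_forall fun x => by
        rw [Real.norm_eq_abs, abs_of_pos (hgpos _)]; exact hgle _
  have int_gx : ∀ y : EuclideanSpace ℝ (Fin n), Integrable (fun x => g (y - x) • x) μ := by
    intro y
    refine Integrable.mono' (integrable_const (c * (2 * σ) + c * ‖y‖)) ?_ ?_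
    · exact ((hgcont.comp (continuous_const.sub continuous_id)).smul continuous_id).aestronglyMeasurable
    · refine Filter.Eventually.of_forall fun x => ?_
      rw [norm_smul, Real.norm_eq_abs, abs_of_pos (hgpos _)]
      have hx : ‖x‖ ≤ ‖y - x‖ + ‖y‖ := by
        calc ‖x‖ = ‖(y - x) - y‖ := by rw [sub_sub_cancel_left, norm_neg]
          _ ≤ ‖y - x‖ + ‖y‖ := norm_sub_le _ _
      calc g (y - x) * ‖x‖ ≤ g (y - x) * (‖y - x‖ + ‖y‖) :=
            mul_le_mul_of_nonneg_left hx (hgpos _).le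
        _ = g (y - x) * ‖y - x‖ + g (y - x) * ‖y‖ := by ring
        _ ≤ c * (2 * σ) + c * ‖y‖ := by
            have h1 := hgnorm (y - x)
            have h2 : g (y - x) * ‖y‖ ≤ c * ‖y‖ :=
              mul_le_mul_of_nonneg_right (hgle _) (norm_nonneg _)
            linarith
  set I : EuclideanSpace ℝ (Fin n) → EuclideanSpace ℝ (Fin n) := fun y => ∫ x, g (y - x) • x ∂μ with hI_def
  have hq0 : ∀ y, 0 < q y := by
    intro y
    rw [hq]
    rw [integral_pos_iff_support_of_nonneg (fun x => (hgpos _).le) (int_g y)]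
    have : (Function.support fun x => g (y - x)) = Set.univ := by
      ext x; simp [Function.mem_support, (hgpos (y - x)).ne']
    rw [this]
    simp [IsProbabilityMeasure.ne_zero μ]
  -- measurability
  have hqm : Measurable q := by
    have : q = fun y => ∫ x, (fun p : EuclideanSpace ℝ (Fin n) × EuclideanSpace ℝ (Fin n) => g (p.1 - p.2)) (y, x) ∂μ := funext hq
    rw [this]
    exact (StronglyMeasurable.integral_prod_right'
      ((hgcont.comp (continuous_fst.sub continuous_snd)).stronglyMeasurable)).measurable
  have hIm : Measurable I := by
    have : I = fun y => ∫ x, (fun p : EuclideanSpace ℝ (Fin n) × EuclideanSpace ℝ (Fin n) => g (p.1 - p.2) • p.2) (y, x) ∂μ := rfl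
    rw [this]
    exact (StronglyMeasurable.integral_prod_right'
      (((hgcont.comp (continuous_fst.sub continuous_snd)).smul continuous_snd).stronglyMeasurable)).measurable
  have hrm : Measurable rstar := by
    have : rstar = fun y => (q y)⁻¹ • I y := funext hrstar
    rw [this]
    exact (hqm.inv).smul hIm
  constructor
  · -- Part 1: optimality
    intro r hr _hmem
    subst hν
    have hgm : Measurable g := hgcont.measurable
    have chain : ∀ f : EuclideanSpace ℝ (Fin n) → EuclideanSpace ℝ (Fin n), Measurable f →
        (∫⁻ z : EuclideanSpace ℝ (Fin n) × EuclideanSpace ℝ (Fin n),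
            ENNReal.ofReal (‖f (z.1 + z.2) - z.1‖ ^ 2)
            ∂(μ.prod (volume.withDensity fun z => ENNReal.ofReal (g z))))
          = ∫⁻ y, ∫⁻ x, ENNReal.ofReal (g (y - x)) * ENNReal.ofReal (‖f y - x‖ ^ 2) ∂μ := by
      intro f hf
      have hmeas1 : Measurable fun z : EuclideanSpace ℝ (Fin n) × EuclideanSpace ℝ (Fin n) =>
          ENNReal.ofReal (‖f (z.1 + z.2) - z.1‖ ^ 2) := by fun_prop
      rw [lintegral_prod _ hmeas1.aemeasurable]
      have step2 : ∀ x, (∫⁻ e, ENNReal.ofReal (‖f (x + e) - x‖ ^ 2)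
            ∂(volume.withDensity fun z => ENNReal.ofReal (g z)))
          = ∫⁻ y, ENNReal.ofReal (g (y - x)) * ENNReal.ofReal (‖f y - x‖ ^ 2) := by
        intro x
        rw [lintegral_withDensity_eq_lintegral_mul _ hgm.ennreal_ofReal (by fun_prop)]
        have htrans := lintegral_add_left_eq_self
          (μ := (volume : Measure (EuclideanSpace ℝ (Fin n))))
          (fun y => ENNReal.ofReal (g (y - x)) * ENNReal.ofReal (‖f y - x‖ ^ 2)) x
        rw [← htrans]
        congr 1
        funext e
        simp [add_sub_cancel_left]
      simp_rw [step2]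
      exact lintegral_lintegral_swap (by fun_prop)
    have hpt : ∀ (y v : EuclideanSpace ℝ (Fin n)),
        (∫⁻ x, ENNReal.ofReal (g (y - x)) * ENNReal.ofReal (‖rstar y - x‖ ^ 2) ∂μ)
          ≤ ∫⁻ x, ENNReal.ofReal (g (y - x)) * ENNReal.ofReal (‖v - x‖ ^ 2) ∂μ := by
      intro y v
      have hmerge : ∀ (w x : EuclideanSpace ℝ (Fin n)),
          ENNReal.ofReal (g (y - x)) * ENNReal.ofReal (‖w - x‖ ^ 2)
            = ENNReal.ofReal (g (y - x) * ‖w - x‖ ^ 2) :=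
        fun w x => (ENNReal.ofReal_mul (hgpos _).le).symm
      simp_rw [hmerge]
      by_cases hS : (∫⁻ x, ENNReal.ofReal (g (y - x) * ‖v - x‖ ^ 2) ∂μ) = ⊤
      · rw [hS]; exact le_top
      set m := rstar y with hm_def
      have hmv : m = (q y)⁻¹ • I y := hrstar y
      have hmeasv : AEStronglyMeasurable (fun x => g (y - x) * ‖v - x‖ ^ 2) μ := by
        apply Continuous.aestronglyMeasurable
        fun_prop
      have hintv : Integrable (fun x => g (y - x) * ‖v - x‖ ^ 2) μ := by
        rw [← lintegral_ofReal_ne_top_iff_integrable hmeasv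
          (Filter.Eventually.of_forall fun x => mul_nonneg (hgpos _).le (by positivity))]
        exact hS
      have hintm : Integrable (fun x => g (y - x) * ‖m - x‖ ^ 2) μ := by
        refine Integrable.mono' ((hintv.const_mul 2).add (((int_g y).const_mul
            (2 * ‖v - m‖ ^ 2)).const_mul 1)) ?_ ?_
        · apply Continuous.aestronglyMeasurable; fun_prop
        · refine Filter.Eventually.of_forall fun x => ?_
          rw [Real.norm_eq_abs, abs_of_nonneg (mul_nonneg (hgpos _).le (by positivity))]
          have hsq : ‖m - x‖ ^ 2 ≤ 2 * ‖v - x‖ ^ 2 + 2 * ‖v - m‖ ^ 2 := by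
            have h1 : ‖m - x‖ ≤ ‖v - x‖ + ‖v - m‖ := by
              calc ‖m - x‖ = ‖(v - x) - (v - m)‖ := by rw [sub_sub_sub_cancel_left]
                _ ≤ ‖v - x‖ + ‖v - m‖ := norm_sub_le _ _
            have h2 : ‖m - x‖ ^ 2 ≤ (‖v - x‖ + ‖v - m‖) ^ 2 :=
              pow_le_pow_left₀ (norm_nonneg _) h1 2
            nlinarith [sq_nonneg (‖v - x‖ - ‖v - m‖)]
          calc g (y - x) * ‖m - x‖ ^ 2
              ≤ g (y - x) * (2 * ‖v - x‖ ^ 2 + 2 * ‖v - m‖ ^ 2) :=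
                mul_le_mul_of_nonneg_left hsq (hgpos _).le
            _ = 2 * (g (y - x) * ‖v - x‖ ^ 2) + 1 * (2 * ‖v - m‖ ^ 2 * g (y - x)) := by ring
      -- the inner-product cross term vanishes
      have hintcross : Integrable (fun x => g (y - x) • (m - x)) μ := by
        have : (fun x => g (y - x) • (m - x)) = fun x => g (y - x) • m - g (y - x) • x := by
          funext x; rw [smul_sub]
        rw [this]
        exact ((int_g y).smul_const m).sub (int_gx y)
      have hcross0 : (∫ x, g (y - x) • (m - x) ∂μ) = 0 := by
        have hsplit : (∫ x, g (y - x) • (m - x) ∂μ)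
            = (∫ x, g (y - x) ∂μ) • m - ∫ x, g (y - x) • x ∂μ := by
          have : (fun x => g (y - x) • (m - x)) = fun x => g (y - x) • m - g (y - x) • x := by
            funext x; rw [smul_sub]
          rw [this, integral_sub ((int_g y).smul_const m) (int_gx y), integral_smul_const]
        rw [hsplit, ← hq y, hmv, smul_smul, mul_inv_cancel₀ (hq0 y).ne', one_smul]
        exact sub_self _
      -- expansion identity
      have hexpand : ∀ x : EuclideanSpace ℝ (Fin n),
          g (y - x) * ‖v - x‖ ^ 2 = g (y - x) * ‖m - x‖ ^ 2
            + g (y - x) * ‖v - m‖ ^ 2 + 2 * inner ℝ (v - m) (g (y - x) • (m - x)) := by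
        intro x
        have hvm : v - x = (v - m) + (m - x) := by abel
        rw [real_inner_smul_right, hvm, norm_add_sq_real]
        ring
      have hintcross' : Integrable (fun x => 2 * (inner ℝ (v - m) (g (y - x) • (m - x)) : ℝ)) μ :=
        (hintcross.const_inner (v - m)).const_mul 2
      have hintvm : Integrable (fun x => g (y - x) * ‖v - m‖ ^ 2) μ :=
        (int_g y).mul_const _
      have hle : (∫ x, g (y - x) * ‖m - x‖ ^ 2 ∂μ) ≤ ∫ x, g (y - x) * ‖v - x‖ ^ 2 ∂μ := by
        have hsum : (∫ x, g (y - x) * ‖v - x‖ ^ 2 ∂μ)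
            = (∫ x, g (y - x) * ‖m - x‖ ^ 2 ∂μ) + (∫ x, g (y - x) * ‖v - m‖ ^ 2 ∂μ)
              + ∫ x, 2 * (inner ℝ (v - m) (g (y - x) • (m - x)) : ℝ) ∂μ := by
          have hfe : (fun x => g (y - x) * ‖v - x‖ ^ 2)
              = fun x => (g (y - x) * ‖m - x‖ ^ 2 + g (y - x) * ‖v - m‖ ^ 2)
                + 2 * (inner ℝ (v - m) (g (y - x) • (m - x)) : ℝ) :=
            funext fun x => by rw [hexpand x]
          rw [hfe,
            integral_add (f := fun x => g (y - x) * ‖m - x‖ ^ 2 + g (y - x) * ‖v - m‖ ^ 2)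
              (g := fun x => 2 * (inner ℝ (v - m) (g (y - x) • (m - x)) : ℝ))
              (hintm.add hintvm) hintcross',
            integral_add hintm hintvm]
        have h2 : (∫ x, g (y - x) * ‖v - m‖ ^ 2 ∂μ) = q y * ‖v - m‖ ^ 2 := by
          rw [integral_mul_const, ← hq y]
        have h3 : (∫ x, 2 * (inner ℝ (v - m) (g (y - x) • (m - x)) : ℝ) ∂μ) = 0 := by
          rw [integral_const_mul, integral_inner hintcross, hcross0, inner_zero_right, mul_zero]
        rw [hsum, h2, h3]
        have hnn : (0:ℝ) ≤ q y * ‖v - m‖ ^ 2 := mul_nonneg (hq0 y).le (by positivity)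
        linarith
      calc (∫⁻ x, ENNReal.ofReal (g (y - x) * ‖m - x‖ ^ 2) ∂μ)
          = ENNReal.ofReal (∫ x, g (y - x) * ‖m - x‖ ^ 2 ∂μ) :=
            (ofReal_integral_eq_lintegral_ofReal hintm
              (Filter.Eventually.of_forall fun x => mul_nonneg (hgpos _).le (by positivity))).symm
        _ ≤ ENNReal.ofReal (∫ x, g (y - x) * ‖v - x‖ ^ 2 ∂μ) := ENNReal.ofReal_le_ofReal hle
        _ = ∫⁻ x, ENNReal.ofReal (g (y - x) * ‖v - x‖ ^ 2) ∂μ :=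
            ofReal_integral_eq_lintegral_ofReal hintv
              (Filter.Eventually.of_forall fun x => mul_nonneg (hgpos _).le (by positivity))
    rw [chain rstar hrm, chain r hr]
    exact lintegral_mono fun y => hpt y (r y)
  · -- Part 2: residual identity
    intro y
    -- derivative of q
    have key : HasFDerivAt q (innerSL ℝ ((σ ^ 2)⁻¹ • (I y - q y • y))) y := by
      set F' : EuclideanSpace ℝ (Fin n) → EuclideanSpace ℝ (Fin n) →
          EuclideanSpace ℝ (Fin n) →L[ℝ] ℝ :=
        fun y' a => (-(σ ^ 2)⁻¹ * g (y' - a)) • innerSL ℝ (y' - a) with hF'_def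
      have hbnd : ∀ (y' a : EuclideanSpace ℝ (Fin n)),
          ‖F' y' a‖ ≤ (σ ^ 2)⁻¹ * (c * (2 * σ)) := by
        intro y' a
        rw [hF'_def]
        apply ContinuousLinearMap.opNorm_le_bound _ (by positivity)
        intro v
        simp only [ContinuousLinearMap.coe_smul', Pi.smul_apply, innerSL_apply_apply,
          smul_eq_mul, Real.norm_eq_abs]
        have hcs : |(inner ℝ (y' - a) v : ℝ)| ≤ ‖y' - a‖ * ‖v‖ := abs_real_inner_le_norm _ _
        calc |(-(σ ^ 2)⁻¹ * g (y' - a)) * inner ℝ (y' - a) v|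
            = (σ ^ 2)⁻¹ * g (y' - a) * |(inner ℝ (y' - a) v : ℝ)| := by
              rw [abs_mul, abs_mul, abs_neg, abs_of_nonneg (by positivity : (0:ℝ) ≤ (σ ^ 2)⁻¹),
                abs_of_pos (hgpos _)]
          _ ≤ (σ ^ 2)⁻¹ * g (y' - a) * (‖y' - a‖ * ‖v‖) := by
              exact mul_le_mul_of_nonneg_left hcs (mul_nonneg (by positivity) (hgpos _).le)
          _ = (σ ^ 2)⁻¹ * (g (y' - a) * ‖y' - a‖) * ‖v‖ := by ring
          _ ≤ (σ ^ 2)⁻¹ * (c * (2 * σ)) * ‖v‖ := by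
              apply mul_le_mul_of_nonneg_right _ (norm_nonneg v)
              exact mul_le_mul_of_nonneg_left (hgnorm _) (by positivity)
      have hF : HasFDerivAt (fun y' => ∫ a, g (y' - a) ∂μ) (∫ a, F' y a ∂μ) y := by
        apply hasFDerivAt_integral_of_dominated_of_fderiv_le
          (bound := fun _ => (σ ^ 2)⁻¹ * (c * (2 * σ))) (s := Metric.ball y 1) (Metric.ball_mem_nhds y one_pos)
        · exact Filter.Eventually.of_forall fun y' => (int_g y').aestronglyMeasurable
        · exact int_g y
        · apply Continuous.aestronglyMeasurable
          exact (by fun_prop : Continuous fun a => -(σ ^ 2)⁻¹ * g (y - a)).smul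
            ((innerSL ℝ).continuous.comp (continuous_const.sub continuous_id))
        · exact Filter.Eventually.of_forall fun a y' _ => hbnd y' a
        · exact integrable_const _
        · refine Filter.Eventually.of_forall fun a y' _ => ?_
          have h := dae_gauss_hasFDerivAt c σ a y'
          rw [hF'_def]
          simp only [hg]
          exact h
      have hqfun : q = fun y' => ∫ a, g (y' - a) ∂μ := funext hq
      rw [hqfun]
      refine hF.congr_fderiv ?_
      symm
      have hw : Integrable (fun a => (-(σ ^ 2)⁻¹ * g (y - a)) • (y - a)) μ := by
        refine Integrable.mono' (integrable_const ((σ ^ 2)⁻¹ * (c * (2 * σ)))) ?_ ?_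
        · apply Continuous.aestronglyMeasurable
          exact (by fun_prop : Continuous fun a => -(σ ^ 2)⁻¹ * g (y - a)).smul
            (continuous_const.sub continuous_id)
        · refine Filter.Eventually.of_forall fun a => ?_
          rw [norm_smul, Real.norm_eq_abs, abs_mul, abs_neg,
            abs_of_nonneg (by positivity : (0:ℝ) ≤ (σ ^ 2)⁻¹), abs_of_pos (hgpos _), mul_assoc]
          exact mul_le_mul_of_nonneg_left (hgnorm _) (by positivity)
      have step1 : (∫ a, F' y a ∂μ)
          = innerSL ℝ (∫ a, (-(σ ^ 2)⁻¹ * g (y - a)) • (y - a) ∂μ) := by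
        rw [← ContinuousLinearMap.integral_comp_comm (innerSL ℝ) hw]
        congr 1
        funext a
        rw [hF'_def]
        exact (_root_.map_smul (innerSL ℝ) _ _).symm
      rw [step1]
      congr 1
      have expand : (fun a => (-(σ ^ 2)⁻¹ * g (y - a)) • (y - a))
          = fun a => (-(σ ^ 2)⁻¹) • (g (y - a) • y - g (y - a) • a) := by
        funext a
        rw [mul_smul, smul_sub]
      rw [expand, integral_smul, integral_sub ((int_g y).smul_const y) (int_gx y),
        integral_smul_const, ← hq y]
      rw [neg_smul, smul_sub, smul_sub, neg_sub]
      simp only [hI_def, ← hq]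
    have hqf : HasFDerivAt q ((InnerProductSpace.toDual ℝ (EuclideanSpace ℝ (Fin n))) ((σ ^ 2)⁻¹ • (I y - q y • y))) y := by
      convert key using 1
      rfl
    have hlog := (Real.hasDerivAt_log (hq0 y).ne').comp_hasFDerivAt y hqf
    have hgrad : HasGradientAt (fun z => Real.log (q z))
        ((q y)⁻¹ • ((σ ^ 2)⁻¹ • (I y - q y • y))) y := by
      rw [hasGradientAt_iff_hasFDerivAt]
      refine hlog.congr_fderiv ?_
      exact (_root_.map_smul _ _ _).symm
    rw [hgrad.gradient]
    rw [hrstar y]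
    have hσ2 : (σ ^ 2) ≠ 0 := by positivity
    have hqy : q y ≠ 0 := (hq0 y).ne'
    rw [smul_comm (σ ^ 2), smul_smul (σ ^ 2), mul_inv_cancel₀ hσ2, one_smul,
      smul_sub, smul_smul, inv_mul_cancel₀ hqy, one_smul]
end

section
/- Let p : ℝⁿ → ℝ be a bounded, continuously differentiable probability density whose gradient ∇p is bounded and uniformly continuous, and let y ∈ ℝⁿ be a point with p(y) > 0. For σ > 0 let q_σ = p * g_σ denote the convolution of p with the N(0, σ²I) density g_σ. Then as σ → 0⁺ one has q_σ(y) → p(y) and ∇q_σ(y) → ∇p(y), hence ∇ log q_σ(y) → ∇ log p(y); consequently the exact optimal-DAE residual satisfies σ² ∇ log q_σ(y) = σ² ∇ log p(y) + o(σ²) as σ² → 0. -/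
open MeasureTheory Filter Asymptotics
open scoped Topology

noncomputable section

namespace SmoothedScoreAux

variable {n : ℕ}

lemma integrable_gauss {b : ℝ} (hb : 0 < b) :
    Integrable (fun z : EuclideanSpace ℝ (Fin n) => Real.exp (-b * ‖z‖ ^ 2)) := by
  have h := (GaussianFourier.integrable_cexp_neg_mul_sq_norm_add
    (V := EuclideanSpace ℝ (Fin n)) (b := (b : ℂ)) (by simpa using hb) 0 0).norm
  refine (integrable_congr (Eventually.of_forall fun v => ?_)).mpr h
  simp [Complex.norm_exp, ← Complex.ofReal_pow]

/-- the standard Gaussian density -/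
def g1 (u : EuclideanSpace ℝ (Fin n)) : ℝ :=
  (2 * Real.pi) ^ (-(n : ℝ) / 2) * Real.exp (-‖u‖ ^ 2 / 2)

lemma g1_nonneg (u : EuclideanSpace ℝ (Fin n)) : 0 ≤ g1 u := by
  unfold g1; positivity

lemma g1_continuous : Continuous (g1 (n := n)) := by
  unfold g1
  fun_prop

lemma g1_integrable : Integrable (g1 (n := n)) := by
  have : (g1 (n := n)) = fun u => (2 * Real.pi) ^ (-(n : ℝ) / 2) *
      Real.exp (-(2⁻¹ : ℝ) * ‖u‖ ^ 2) := by
    funext u; unfold g1; ring_nf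
  rw [this]
  exact (integrable_gauss (by norm_num)).const_mul _

lemma g1_integral : ∫ u : EuclideanSpace ℝ (Fin n), g1 u = 1 := by
  have h1 : ∫ u : EuclideanSpace ℝ (Fin n), g1 u
      = (2 * Real.pi) ^ (-(n : ℝ) / 2) * ∫ u : EuclideanSpace ℝ (Fin n),
        Real.exp (-(2⁻¹ : ℝ) * ‖u‖ ^ 2) := by
    rw [← integral_const_mul]
    congr 1; funext u; unfold g1; ring_nf
  rw [h1, GaussianFourier.integral_rexp_neg_mul_sq_norm (by norm_num : (0:ℝ) < 2⁻¹)]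
  rw [finrank_euclideanSpace_fin]
  rw [show Real.pi / 2⁻¹ = 2 * Real.pi by ring]
  rw [← Real.rpow_add (by positivity)]
  rw [show -(n:ℝ)/2 + n/2 = 0 by ring, Real.rpow_zero]


section Subst

variable {F : Type*} [NormedAddCommGroup F] [NormedSpace ℝ F]

lemma gauss_scale {σ : ℝ} (hσ : 0 < σ) (u : EuclideanSpace ℝ (Fin n)) :
    (2 * Real.pi * σ ^ 2) ^ (-(n : ℝ) / 2) *
      Real.exp (-‖σ • u‖ ^ 2 / (2 * σ ^ 2)) = ((σ ^ n)⁻¹ : ℝ) * g1 u := by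
  have hσ' : σ ≠ 0 := ne_of_gt hσ
  have h1 : ‖σ • u‖ ^ 2 = σ ^ 2 * ‖u‖ ^ 2 := by
    rw [norm_smul]; simp [mul_pow, Real.norm_eq_abs, sq_abs]
  have h2 : -‖σ • u‖ ^ 2 / (2 * σ ^ 2) = -‖u‖ ^ 2 / 2 := by
    rw [h1]; field_simp
  have h3 : (2 * Real.pi * σ ^ 2) ^ (-(n : ℝ) / 2)
      = (2 * Real.pi) ^ (-(n : ℝ) / 2) * (σ ^ n)⁻¹ := by
    rw [Real.mul_rpow (by positivity) (by positivity)]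
    congr 1
    rw [← Real.rpow_natCast σ 2, ← Real.rpow_mul hσ.le,
      show (2 : ℕ) * (-(n:ℝ)/2) = -(n:ℝ) by push_cast; ring,
      Real.rpow_neg hσ.le, Real.rpow_natCast]
  rw [h2, h3]; unfold g1; ring

lemma substitution (f : EuclideanSpace ℝ (Fin n) → F) (y : EuclideanSpace ℝ (Fin n))
    {σ : ℝ} (hσ : 0 < σ) :
    ∫ z, ((2 * Real.pi * σ ^ 2) ^ (-(n : ℝ) / 2) *
        Real.exp (-‖z‖ ^ 2 / (2 * σ ^ 2))) • f (y - z)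
      = ∫ u, g1 u • f (y - σ • u) := by
  have h := MeasureTheory.Measure.integral_comp_smul (μ := volume)
    (fun z : EuclideanSpace ℝ (Fin n) =>
      ((2 * Real.pi * σ ^ 2) ^ (-(n : ℝ) / 2) *
        Real.exp (-‖z‖ ^ 2 / (2 * σ ^ 2))) • f (y - z)) σ
  rw [finrank_euclideanSpace_fin] at h
  have h2 : ∀ u : EuclideanSpace ℝ (Fin n),
      ((2 * Real.pi * σ ^ 2) ^ (-(n : ℝ) / 2) *
        Real.exp (-‖σ • u‖ ^ 2 / (2 * σ ^ 2))) • f (y - σ • u)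
      = (σ ^ n)⁻¹ • (g1 u • f (y - σ • u)) := by
    intro u
    rw [gauss_scale hσ u, mul_smul]
  simp only [h2] at h
  rw [integral_smul] at h
  have hpos : (0:ℝ) < σ ^ n := by positivity
  rw [abs_of_nonneg (by positivity : (0:ℝ) ≤ (σ ^ n)⁻¹)] at h
  have h3 := congrArg (fun v : F => (σ ^ n) • v) h
  simp only [← smul_assoc, smul_eq_mul, mul_inv_cancel₀ (ne_of_gt hpos), one_smul] at h3
  exact h3.symm

end Subst

lemma approx {F : Type*} [NormedAddCommGroup F] [NormedSpace ℝ F] [CompleteSpace F]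
    (f : EuclideanSpace ℝ (Fin n) → F) (hf : Continuous f) {C : ℝ}
    (hfb : ∀ x, ‖f x‖ ≤ C) (y : EuclideanSpace ℝ (Fin n)) :
    Tendsto (fun σ : ℝ => ∫ u, g1 u • f (y - σ • u)) (𝓝 0) (𝓝 (f y)) := by
  have hlim : ∫ u : EuclideanSpace ℝ (Fin n), g1 u • f y = f y := by
    rw [integral_smul_const, g1_integral, one_smul]
  rw [← hlim]
  refine tendsto_integral_filter_of_dominated_convergence (fun u => C * g1 u) ?_ ?_ ?_ ?_
  · filter_upwards with σ
    exact (g1_continuous.smul (hf.comp (by fun_prop))).aestronglyMeasurable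
  · filter_upwards with σ
    filter_upwards with u
    rw [norm_smul, Real.norm_eq_abs, abs_of_nonneg (g1_nonneg u)]
    calc g1 u * ‖f (y - σ • u)‖ ≤ g1 u * C :=
          mul_le_mul_of_nonneg_left (hfb _) (g1_nonneg u)
      _ = C * g1 u := mul_comm _ _
  · exact g1_integrable.const_mul C
  · filter_upwards with u
    have ht : Tendsto (fun σ : ℝ => y - σ • u) (𝓝 0) (𝓝 y) := by
      have h0 : Tendsto (fun σ : ℝ => σ • u) (𝓝 (0:ℝ)) (𝓝 ((0:ℝ) • u)) :=
        (continuous_id.smul continuous_const).tendsto 0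
      simpa using tendsto_const_nhds.sub h0
    exact ((hf.tendsto y).comp ht).const_smul (g1 u)

end SmoothedScoreAux
set_option synthInstance.maxHeartbeats 1000000 in
set_option maxHeartbeats 2000000 in
/-- Let `p` be a bounded C¹ probability density on ℝⁿ whose gradient is bounded and
uniformly continuous, and let `y` be a point with `p(y) > 0`. Let `q σ = p * g_σ` be
the convolution of `p` with the `N(0, σ²I)` density. Then as `σ → 0⁺`:
`q σ (y) → p(y)`, `∇(q σ)(y) → ∇p(y)`, hence `∇ log (q σ)(y) → ∇ log p(y)`, and
consequently `σ² ∇ log (q σ)(y) = σ² ∇ log p(y) + o(σ²)`. -/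
theorem smoothed_score_tendsto_score {n : ℕ}
    (p : EuclideanSpace ℝ (Fin n) → ℝ)
    (hpb : ∃ C, ∀ x, |p x| ≤ C)
    (hp : ContDiff ℝ 1 p)
    (hgradb : ∃ C, ∀ x, ‖gradient p x‖ ≤ C)
    (hgradu : UniformContinuous (fun x => gradient p x))
    (hpint : Integrable p) (hpnn : ∀ x, 0 ≤ p x) (hpone : ∫ x, p x = 1)
    (y : EuclideanSpace ℝ (Fin n)) (hy : 0 < p y)
    (g : ℝ → EuclideanSpace ℝ (Fin n) → ℝ)
    (hg : ∀ σ z, g σ z = (2 * Real.pi * σ ^ 2) ^ (-(n : ℝ) / 2) *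
      Real.exp (-‖z‖ ^ 2 / (2 * σ ^ 2)))
    (q : ℝ → EuclideanSpace ℝ (Fin n) → ℝ)
    (hq : ∀ σ x, q σ x = ∫ z, p (x - z) * g σ z) :
    Tendsto (fun σ => q σ y) (nhdsWithin 0 (Set.Ioi 0)) (nhds (p y)) ∧
    Tendsto (fun σ => gradient (q σ) y) (nhdsWithin 0 (Set.Ioi 0))
      (nhds (gradient p y)) ∧
    Tendsto (fun σ => gradient (fun z => Real.log (q σ z)) y)
      (nhdsWithin 0 (Set.Ioi 0))
      (nhds (gradient (fun z => Real.log (p z)) y)) ∧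
    (fun σ => σ ^ 2 • gradient (fun z => Real.log (q σ z)) y
        - σ ^ 2 • gradient (fun z => Real.log (p z)) y)
      =o[nhdsWithin 0 (Set.Ioi 0)] (fun σ => σ ^ 2) := by
  obtain ⟨C, hC⟩ := hpb
  obtain ⟨C', hC'⟩ := hgradb
  have hpc : Continuous p := hp.continuous
  have hgc : Continuous fun x => gradient p x := hgradu.continuous
  -- basic facts about g
  have hgnn : ∀ (σ : ℝ) z, 0 ≤ g σ z := fun σ z => by rw [hg]; positivity
  have hgcont : ∀ σ : ℝ, Continuous (g σ) := by
    intro σ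
    have : g σ = fun z => (2 * Real.pi * σ ^ 2) ^ (-(n : ℝ) / 2) *
        Real.exp (-‖z‖ ^ 2 / (2 * σ ^ 2)) := funext (hg σ)
    rw [this]; fun_prop
  have hgint : ∀ σ : ℝ, 0 < σ → Integrable (g σ) := by
    intro σ hσ
    have h : g σ = fun z => (2 * Real.pi * σ ^ 2) ^ (-(n : ℝ) / 2) *
        Real.exp (-(1 / (2 * σ ^ 2)) * ‖z‖ ^ 2) := by
      funext z; rw [hg]; congr 1; field_simp
    rw [h]
    exact (SmoothedScoreAux.integrable_gauss (by positivity)).const_mul _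
  -- dual / gradient bookkeeping
  have hdual : ∀ v : EuclideanSpace ℝ (Fin n),
      InnerProductSpace.toDual ℝ (EuclideanSpace ℝ (Fin n)) v = innerSL ℝ v := by
    intro v; ext w
    rw [InnerProductSpace.toDual_apply_apply, innerSL_apply_apply]
  have htdg : ∀ (f : EuclideanSpace ℝ (Fin n) → ℝ) (x : EuclideanSpace ℝ (Fin n)),
      InnerProductSpace.toDual ℝ (EuclideanSpace ℝ (Fin n)) (gradient f x)
        = fderiv ℝ f x := fun f x =>
    (InnerProductSpace.toDual ℝ (EuclideanSpace ℝ (Fin n))).apply_symm_apply (fderiv ℝ f x)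
  have hfdb : ∀ w, ‖fderiv ℝ p w‖ ≤ C' := by
    intro w
    rw [← htdg p w]
    rw [(InnerProductSpace.toDual ℝ (EuclideanSpace ℝ (Fin n))).norm_map (gradient p w)]
    exact hC' w
  -- Part 1
  have key1 : ∀ σ : ℝ, 0 < σ → q σ y = ∫ u, SmoothedScoreAux.g1 u • p (y - σ • u) := by
    intro σ hσ
    rw [hq, ← SmoothedScoreAux.substitution p y hσ]
    congr 1; funext z
    rw [hg, smul_eq_mul, mul_comm]
  have h1 : Tendsto (fun σ => q σ y) (𝓝[>] (0:ℝ)) (𝓝 (p y)) := by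
    have hb : ∀ x, ‖p x‖ ≤ C := fun x => by rw [Real.norm_eq_abs]; exact hC x
    refine ((SmoothedScoreAux.approx p hpc hb y).mono_left nhdsWithin_le_nhds).congr' ?_
    filter_upwards [self_mem_nhdsWithin] with σ hσ
    exact (key1 σ hσ).symm
  -- differentiating under the integral
  have hfder : ∀ σ : ℝ, 0 < σ → HasFDerivAt (q σ)
      (∫ z, g σ z • fderiv ℝ p (y - z)) y := by
    intro σ hσ
    have hqfun : q σ = fun x => ∫ z, p (x - z) * g σ z := funext (hq σ)
    rw [hqfun]
    refine hasFDerivAt_integral_of_dominated_of_fderiv_le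
      (F' := fun x z => g σ z • fderiv ℝ p (x - z))
      (bound := fun z => C' * g σ z) Filter.univ_mem ?_ ?_ ?_ ?_ ?_ ?_
    · filter_upwards with x
      exact ((hpc.comp (continuous_const.sub continuous_id)).mul (hgcont σ)).aestronglyMeasurable
    · refine Integrable.mono' ((hgint σ hσ).const_mul C) ?_ ?_
      · exact ((hpc.comp (continuous_const.sub continuous_id)).mul (hgcont σ)).aestronglyMeasurable
      · filter_upwards with z
        rw [Real.norm_eq_abs, abs_mul, abs_of_nonneg (hgnn σ z)]
        exact mul_le_mul_of_nonneg_right (hC _) (hgnn σ z)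
    · exact ((hgcont σ).smul ((hp.continuous_fderiv one_ne_zero).comp
        (continuous_const.sub continuous_id))).aestronglyMeasurable
    · filter_upwards with z
      intro x _
      have hns : ‖g σ z • fderiv ℝ p (x - z)‖ = ‖g σ z‖ * ‖fderiv ℝ p (x - z)‖ :=
        norm_smul _ _
      rw [hns, Real.norm_eq_abs, abs_of_nonneg (hgnn σ z), mul_comm]
      exact mul_le_mul_of_nonneg_right (hfdb _) (hgnn σ z)
    · exact (hgint σ hσ).const_mul C'
    · filter_upwards with z
      intro x _
      have h1' : HasFDerivAt (fun x : EuclideanSpace ℝ (Fin n) => x - z)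
          (ContinuousLinearMap.id ℝ (EuclideanSpace ℝ (Fin n))) x :=
        (hasFDerivAt_id x).sub_const z
      have h2' := ((hp.differentiable one_ne_zero (x - z)).hasFDerivAt).comp x h1'
      have h3' := h2'.mul_const (g σ z)
      simpa using h3'
  have hint' : ∀ σ : ℝ, 0 < σ →
      Integrable (fun z => g σ z • gradient p (y - z)) := by
    intro σ hσ
    refine Integrable.mono' ((hgint σ hσ).const_mul C') ?_ ?_
    · exact ((hgcont σ).smul (hgc.comp (continuous_const.sub continuous_id))).aestronglyMeasurable
    · filter_upwards with z
      rw [norm_smul, Real.norm_eq_abs, abs_of_nonneg (hgnn σ z), mul_comm]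
      exact mul_le_mul_of_nonneg_right (hC' _) (hgnn σ z)
  have hgradq : ∀ σ : ℝ, 0 < σ →
      HasGradientAt (q σ) (∫ z, g σ z • gradient p (y - z)) y := by
    intro σ hσ
    have hswap : ∫ z, g σ z • fderiv ℝ p (y - z)
        = innerSL ℝ (∫ z, g σ z • gradient p (y - z)) := by
      rw [← ContinuousLinearMap.integral_comp_comm (innerSL ℝ) (hint' σ hσ)]
      congr 1; funext z
      rw [_root_.map_smul, ← hdual, htdg]
    show HasFDerivAt (q σ) (InnerProductSpace.toDual ℝ (EuclideanSpace ℝ (Fin n))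
      (∫ z, g σ z • gradient p (y - z))) y
    rw [hdual, ← hswap]
    exact hfder σ hσ
  have key2 : ∀ σ : ℝ, 0 < σ →
      gradient (q σ) y = ∫ u, SmoothedScoreAux.g1 u • gradient p (y - σ • u) := by
    intro σ hσ
    rw [(hgradq σ hσ).gradient,
      ← SmoothedScoreAux.substitution (fun w => gradient p w) y hσ]
    congr 1; funext z
    rw [hg]
  have h2 : Tendsto (fun σ => gradient (q σ) y) (𝓝[>] (0:ℝ)) (𝓝 (gradient p y)) := by
    refine ((SmoothedScoreAux.approx (fun x => gradient p x) hgc hC' y).mono_left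
      nhdsWithin_le_nhds).congr' ?_
    filter_upwards [self_mem_nhdsWithin] with σ hσ
    exact (key2 σ hσ).symm
  -- Part 3
  have hqpos : ∀ᶠ σ in 𝓝[>] (0:ℝ), 0 < q σ y := h1.eventually (eventually_gt_nhds hy)
  have keylog : ∀ σ : ℝ, 0 < σ → 0 < q σ y →
      gradient (fun z => Real.log (q σ z)) y = (q σ y)⁻¹ • gradient (q σ) y := by
    intro σ hσ hqy
    have hF := hfder σ hσ
    have hlog := hF.log (ne_of_gt hqy)
    have hGA : HasGradientAt (fun z => Real.log (q σ z))
        ((q σ y)⁻¹ • gradient (q σ) y) y := by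
      show HasFDerivAt _ (InnerProductSpace.toDual ℝ (EuclideanSpace ℝ (Fin n))
        ((q σ y)⁻¹ • gradient (q σ) y)) y
      rw [hdual, _root_.map_smul, ← hdual, htdg, hF.fderiv]
      exact hlog
    exact hGA.gradient
  have hplog : gradient (fun z => Real.log (p z)) y = (p y)⁻¹ • gradient p y := by
    have hF := (hp.differentiable one_ne_zero y).hasFDerivAt
    have hlog := hF.log (ne_of_gt hy)
    have hGA : HasGradientAt (fun z => Real.log (p z))
        ((p y)⁻¹ • gradient p y) y := by
      show HasFDerivAt _ (InnerProductSpace.toDual ℝ (EuclideanSpace ℝ (Fin n))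
        ((p y)⁻¹ • gradient p y)) y
      rw [hdual, _root_.map_smul, ← hdual, htdg]
      exact hlog
    exact hGA.gradient
  have h3 : Tendsto (fun σ => gradient (fun z => Real.log (q σ z)) y)
      (𝓝[>] (0:ℝ)) (𝓝 (gradient (fun z => Real.log (p z)) y)) := by
    rw [hplog]
    have hT : Tendsto (fun σ => (q σ y)⁻¹ • gradient (q σ) y) (𝓝[>] (0:ℝ))
        (𝓝 ((p y)⁻¹ • gradient p y)) := (h1.inv₀ (ne_of_gt hy)).smul h2
    refine hT.congr' ?_
    filter_upwards [self_mem_nhdsWithin, hqpos] with σ hσ hqy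
    exact (keylog σ hσ hqy).symm
  refine ⟨h1, h2, h3, ?_⟩
  rw [isLittleO_iff]
  intro ε hε
  have hev : ∀ᶠ σ in 𝓝[>] (0:ℝ),
      ‖gradient (fun z => Real.log (q σ z)) y
        - gradient (fun z => Real.log (p z)) y‖ ≤ ε := by
    have := Metric.tendsto_nhds.mp h3 ε hε
    filter_upwards [this] with σ hσ
    rw [← dist_eq_norm]
    exact hσ.le
  filter_upwards [hev] with σ hσ
  rw [← smul_sub, norm_smul, Real.norm_eq_abs]
  calc |σ ^ 2| * ‖gradient (fun z => Real.log (q σ z)) y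
        - gradient (fun z => Real.log (p z)) y‖
      ≤ |σ ^ 2| * ε := mul_le_mul_of_nonneg_left hσ (abs_nonneg _)
    _ = ε * ‖σ ^ 2‖ := by rw [Real.norm_eq_abs]; ring
end
end
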